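/- Let (A, •, ⟨ , ⟩) be a flat pseudo-Euclidean left Leibniz algebra, i.e., its Levi-Civita products satisfy L⋆_{u•v} = [L⋆_u, L⋆_v] and L⋆_u∘L⋆_v = −L⋆_u∘L∘_v = −L∘_u∘L⋆_v = L∘_u∘L∘_v for all u,v. Then (A, •) is also a right Leibniz algebra (hence a symmetric Leibniz algebra): u•(v•w) = (u•v)•w − (u•w)•v for all u,v,w. -/
import Mathlib


/-- Every flat pseudo-Euclidean left Leibniz algebra is a right Leibniz algebra
(hence a symmetric Leibniz algebra). -/
theorem flat_implies_rightLeibniz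
    {K A : Type*} [Field K] [AddCommGroup A] [Module K A]
    (htwo : (2 : K) ≠ 0)
    (mul starP circP : A →ₗ[K] A →ₗ[K] A)
    (B : A →ₗ[K] A →ₗ[K] K)
    (hLL : ∀ u v w : A, mul u (mul v w) = mul (mul u v) w + mul v (mul u w))
    (hsymm : ∀ u v : A, B u v = B v u)
    (hnd : ∀ v : A, (∀ u : A, B u v = 0) → v = 0)
    (htor : ∀ u v : A, mul u v = starP u v + circP v u)
    (hcomp : ∀ u v w : A, B (starP u v) w = B v (circP u w))
    (hflat1 : ∀ u v : A, starP (mul u v) = starP u ∘ₗ starP v - starP v ∘ₗ starP u)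
    (hflat2 : ∀ u v : A,
      starP u ∘ₗ starP v = -(starP u ∘ₗ circP v) ∧
      starP u ∘ₗ starP v = -(circP u ∘ₗ starP v) ∧
      starP u ∘ₗ starP v = circP u ∘ₗ circP v) :
    ∀ u v w : A, mul u (mul v w) = mul (mul u v) w - mul (mul u w) v := by
  -- pointwise versions of the flatness conditions
  have h1 : ∀ u v x : A, starP u (starP v x) = -(starP u (circP v x)) := by
    intro u v x
    have := LinearMap.congr_fun (hflat2 u v).1 x
    simpa using this
  have h2 : ∀ u v x : A, starP u (starP v x) = -(circP u (starP v x)) := by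
    intro u v x
    have := LinearMap.congr_fun (hflat2 u v).2.1 x
    simpa using this
  have h3 : ∀ u v x : A, starP u (starP v x) = circP u (circP v x) := by
    intro u v x
    have := LinearMap.congr_fun (hflat2 u v).2.2 x
    simpa using this
  have hf1 : ∀ u v x : A,
      starP (mul u v) x = starP u (starP v x) - starP v (starP u x) := by
    intro u v x
    have := LinearMap.congr_fun (hflat1 u v) x
    simpa using this
  -- L_u ∘ S_v = 0 and C_u ∘ S_v = 0, where S_v x = starP v x + circP v x
  have hLS : ∀ u v x : A, starP u (starP v x + circP v x) = 0 := by
    intro u v x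
    rw [map_add, h1 u v x]; abel
  have hCS : ∀ u v x : A, circP u (starP v x + circP v x) = 0 := by
    intro u v x
    have e2 := h2 u v x
    have e3 := h3 u v x
    rw [map_add, ← e3]
    rw [eq_neg_iff_add_eq_zero] at e2
    linear_combination (norm := abel) e2
  -- adjoint formula: circP (mul u w) = C_w C_u - C_u C_w
  have hCmul : ∀ u w x : A,
      circP (mul u w) x = circP w (circP u x) - circP u (circP w x) := by
    intro u w x
    have key : ∀ y : A,
        B y (circP (mul u w) x - (circP w (circP u x) - circP u (circP w x))) = 0 := by
      intro y
      have e1 : B y (circP (mul u w) x) = B (starP (mul u w) y) x :=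
        (hcomp (mul u w) y x).symm
      have e2 : B y (circP w (circP u x)) = B (starP u (starP w y)) x := by
        rw [← hcomp w y (circP u x), ← hcomp u (starP w y) x]
      have e3 : B y (circP u (circP w x)) = B (starP w (starP u y)) x := by
        rw [← hcomp u y (circP w x), ← hcomp w (starP u y) x]
      have e4 := hf1 u w y
      simp only [map_sub, e1, e2, e3, e4, LinearMap.sub_apply, LinearMap.map_sub]
      ring
    exact sub_eq_zero.mp (hnd _ key)
  -- S_{mul u w} = 0 pointwise
  have hSa : ∀ u w v : A, starP (mul u w) v + circP (mul u w) v = 0 := by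
    intro u w v
    rw [hf1, hCmul, ← h3 u w v, ← h3 w u v]
    abel
  -- S_v (mul u w) = 0 via nondegeneracy
  have hSva : ∀ u w v : A, starP v (mul u w) + circP v (mul u w) = 0 := by
    intro u w v
    apply hnd
    intro y
    have eL : B y (starP v (mul u w)) = B (mul u w) (circP v y) := by
      rw [hsymm, hcomp v (mul u w) y]
    have eC : B y (circP v (mul u w)) = B (mul u w) (starP v y) := by
      rw [← hcomp v y (mul u w), hsymm]
    have key : B (mul u w) (starP v y + circP v y) = 0 := by
      rw [htor u w]
      have t1 : B (starP u w) (starP v y + circP v y) = 0 := by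
        rw [hcomp u w (starP v y + circP v y)]
        have : circP u (starP v y + circP v y) = 0 := hCS u v y
        rw [this, map_zero]
      have t2 : B (circP w u) (starP v y + circP v y) = 0 := by
        rw [hsymm, ← hcomp w (starP v y + circP v y) u]
        have : starP w (starP v y + circP v y) = 0 := hLS w v y
        rw [this, LinearMap.map_zero, LinearMap.zero_apply]
      simp only [map_add, LinearMap.add_apply] at t1 t2 ⊢
      linear_combination t1 + t2
    rw [map_add, eL, eC, ← map_add]
    rw [show circP v y + starP v y = starP v y + circP v y from add_comm _ _]
    exact key
  intro u v w
  rw [hLL u v w]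
  have key : mul v (mul u w) = -(mul (mul u w) v) := by
    have e1 := htor v (mul u w)
    have e2 := htor (mul u w) v
    rw [e1, e2]
    have := hSa u w v
    have h' := hSva u w v
    linear_combination (norm := abel) this + h'
  rw [key]
  abel
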